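/- If the Liouville operator A_f (with A_f g = f·g′, domain { g ∈ H² : f·g′ ∈ H² }) is densely defined on H², then the symbol f is analytic on the unit disc. -/

import Mathlib

open Metric ComplexConjugate

noncomputable abbrev H2 : Type := lp (fun _ : ℕ => ℂ) 2

noncomputable def hardyEval (h : H2) (z : ℂ) : ℂ := ∑' n : ℕ, h n * z ^ n

open Filter FormalMultilinearSeries in
lemma hardyEval_hasFPS (h : H2) :
    HasFPowerSeriesOnBall (hardyEval h) (ofScalars ℂ (fun n => h n)) 0 1 := by
  have hrad : (1 : ENNReal) ≤ (ofScalars ℂ (fun n => h n)).radius := by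
    have := FormalMultilinearSeries.le_radius_of_bound (ofScalars ℂ (fun n => h n)) ‖h‖ (r := 1)
      (fun n => by
        rw [FormalMultilinearSeries.ofScalars_norm]
        simpa using lp.norm_apply_le_norm (by norm_num : (2 : ENNReal) ≠ 0) h n)
    simpa using this
  have hsum : hardyEval h = (ofScalars ℂ (fun n => h n)).sum := by
    funext z
    have := FormalMultilinearSeries.ofScalars_sum_eq (E := ℂ) (fun n => h n) z
    simp only [FormalMultilinearSeries.ofScalarsSum] at this
    rw [hardyEval, this]
    simp [smul_eq_mul]
  rw [hsum]
  exact ((ofScalars ℂ (fun n => h n)).hasFPowerSeriesOnBall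
    (lt_of_lt_of_le one_pos hrad)).mono one_pos hrad

lemma hardyEval_analyticOnNhd (h : H2) :
    AnalyticOnNhd ℂ (hardyEval h) (ball (0 : ℂ) 1) := by
  have := (hardyEval_hasFPS h).analyticOnNhd
  rwa [show (1 : ENNReal) = ((1 : NNReal) : ENNReal) by simp,
    Metric.emetric_ball_nnreal, NNReal.coe_one] at this

open Filter in
lemma hardyEval_hasDerivAt (h : H2) {z : ℂ} (hz : z ∈ ball (0 : ℂ) 1) :
    HasDerivAt (hardyEval h) (∑' n : ℕ, h n * ((n : ℂ) * z ^ (n - 1))) z := by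
  rw [mem_ball_zero_iff] at hz
  obtain ⟨r, hzr, hr1⟩ := exists_between hz
  have hr0 : 0 < r := lt_of_le_of_lt (norm_nonneg z) hzr
  have hu : Summable (fun n : ℕ => ‖h‖ * ((n : ℝ) * r ^ (n - 1))) := by
    apply Summable.mul_left
    rw [← summable_nat_add_iff 1]
    simp only [Nat.add_sub_cancel]
    have h1 : Summable (fun n : ℕ => (n : ℝ) * r ^ n) := by
      simpa using summable_pow_mul_geometric_of_norm_lt_one 1
        (by rwa [Real.norm_eq_abs, abs_of_nonneg hr0.le])
    have h2 : Summable (fun n : ℕ => r ^ n) :=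
      summable_geometric_of_lt_one hr0.le hr1
    simpa [add_mul, one_mul] using h1.add h2
  have := hasDerivAt_tsum_of_isPreconnected (𝕜 := ℂ) (F := ℂ)
    (u := fun n : ℕ => ‖h‖ * ((n : ℝ) * r ^ (n - 1)))
    (g := fun (n : ℕ) (w : ℂ) => h n * w ^ n)
    (g' := fun (n : ℕ) (w : ℂ) => h n * ((n : ℂ) * w ^ (n - 1)))
    (y₀ := 0) (y := z) (t := ball (0 : ℂ) r)
    hu isOpen_ball (convex_ball (0 : ℂ) r).isPreconnected
    (fun n y _ => (hasDerivAt_pow n y).const_mul (h n))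
    (fun n y hy => by
      rw [mem_ball_zero_iff] at hy
      have hbn : ‖h n‖ ≤ ‖h‖ := lp.norm_apply_le_norm (by norm_num : (2 : ENNReal) ≠ 0) h n
      calc ‖h n * ((n : ℂ) * y ^ (n - 1))‖
          = ‖h n‖ * ((n : ℝ) * ‖y‖ ^ (n - 1)) := by
            simp [norm_mul, norm_pow]
        _ ≤ ‖h‖ * ((n : ℝ) * r ^ (n - 1)) := by
            gcongr)
    (mem_ball_self hr0)
    (by
      apply summable_of_ne_finset_zero (s := {0})
      intro n hn
      simp only [Finset.mem_singleton] at hn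
      simp [zero_pow hn])
    (by rwa [mem_ball_zero_iff])
  exact this

/-- If the Liouville operator `A_f g = f·g′` (domain `{g ∈ H² : f·g′ ∈ H²}`) is
densely defined on `H²`, then the symbol `f` is analytic on the unit disc. -/
theorem symbol_analytic_of_densely_defined (f : ℂ → ℂ)
    (hdense : Dense {g : H2 | ∃ u : H2, ∀ z ∈ ball (0 : ℂ) 1,
      hardyEval u z = f z * deriv (hardyEval g) z}) :
    AnalyticOnNhd ℂ f (ball (0 : ℂ) 1) := by
  intro z₀ hz₀
  set S := {g : H2 | ∃ u : H2, ∀ z ∈ ball (0 : ℂ) 1,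
      hardyEval u z = f z * deriv (hardyEval g) z} with hS
  have hz₀n : ‖z₀‖ < 1 := mem_ball_zero_iff.mp hz₀
  -- the coefficient vector of the derivative-evaluation functional
  set c : ℕ → ℂ := fun n => (n : ℂ) * z₀ ^ (n - 1) with hc
  have hwmem : Memℓp (fun n => conj (c n)) 2 := by
    apply memℓp_gen
    have htoReal : (2 : ENNReal).toReal = 2 := by norm_num
    rw [htoReal]
    have hsum : Summable (fun n : ℕ => (n : ℝ) ^ 2 * ‖z₀‖ ^ n) :=
      summable_pow_mul_geometric_of_norm_lt_one 2
        (by rwa [Real.norm_eq_abs, abs_of_nonneg (norm_nonneg z₀)])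
    apply Summable.of_norm_bounded_eventually_nat hsum
    filter_upwards [Filter.eventually_ge_atTop 2] with n hn
    have hnorm : ‖conj (c n)‖ = (n : ℝ) * ‖z₀‖ ^ (n - 1) := by
      simp [hc, norm_mul, norm_pow]
    have hsq : ((n : ℝ) * ‖z₀‖ ^ (n - 1)) ^ 2 = (n : ℝ) ^ 2 * ‖z₀‖ ^ ((n - 1) * 2) := by
      rw [mul_pow, pow_mul]
    rw [Real.norm_of_nonneg (by positivity), hnorm,
      show ((n : ℝ) * ‖z₀‖ ^ (n - 1)) ^ (2 : ℝ) = ((n : ℝ) * ‖z₀‖ ^ (n - 1)) ^ (2 : ℕ) from by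
        rw [← Real.rpow_natCast]; norm_num, hsq]
    have h2 : ‖z₀‖ ^ ((n - 1) * 2) ≤ ‖z₀‖ ^ n :=
      pow_le_pow_of_le_one (norm_nonneg _) hz₀n.le (by omega)
    exact mul_le_mul_of_nonneg_left h2 (by positivity)
  set w : H2 := ⟨fun n => conj (c n), hwmem⟩ with hw
  -- derivative at z₀ as an inner product
  have hderiv_inner : ∀ g : H2, deriv (hardyEval g) z₀ = inner ℂ w g := by
    intro g
    rw [(hardyEval_hasDerivAt g hz₀).deriv, lp.inner_eq_tsum]
    apply tsum_congr
    intro n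
    have hwn : w n = conj (c n) := rfl
    rw [RCLike.inner_apply, hwn, RingHomInvPair.comp_apply_eq₂]
  -- find g in the dense domain with nonvanishing derivative at z₀
  have hex : ∃ g ∈ S, deriv (hardyEval g) z₀ ≠ 0 := by
    by_contra hcon
    push_neg at hcon
    have hsub : S ⊆ {g : H2 | inner ℂ w g = (0 : ℂ)} := by
      intro g hg
      have := hcon g hg
      rwa [hderiv_inner g] at this
    have hclosed : IsClosed {g : H2 | inner ℂ w g = (0 : ℂ)} := by
      have : {g : H2 | inner ℂ w g = (0 : ℂ)} = (innerSL ℂ w) ⁻¹' {0} := rfl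
      rw [this]
      exact isClosed_singleton.preimage (innerSL ℂ w).continuous
    have hall : ∀ g : H2, inner ℂ w g = (0 : ℂ) := by
      intro g
      have : (Set.univ : Set H2) ⊆ {g : H2 | inner ℂ w g = (0 : ℂ)} := by
        rw [← hdense.closure_eq]
        exact hclosed.closure_subset_iff.mpr hsub
      exact this (Set.mem_univ g)
    have hw0 : w = 0 := inner_self_eq_zero.mp (hall w)
    have hw1 : w 1 = conj (c 1) := rfl
    rw [hw0] at hw1
    simp [hc] at hw1
  obtain ⟨g, hgS, hd⟩ := hex
  obtain ⟨u, hu⟩ := hgS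
  -- analyticity of numerator and denominator
  have hgA : AnalyticOnNhd ℂ (deriv (hardyEval g)) (ball (0 : ℂ) 1) :=
    (hardyEval_analyticOnNhd g).deriv_of_isOpen isOpen_ball
  have huA : AnalyticOnNhd ℂ (hardyEval u) (ball (0 : ℂ) 1) :=
    hardyEval_analyticOnNhd u
  have hQ : AnalyticAt ℂ (fun z => hardyEval u z / deriv (hardyEval g) z) z₀ :=
    (huA z₀ hz₀).div (hgA z₀ hz₀) hd
  apply hQ.congr
  have hV : IsOpen (ball (0 : ℂ) 1 ∩ (deriv (hardyEval g)) ⁻¹' {(0 : ℂ)}ᶜ) :=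
    hgA.continuousOn.isOpen_inter_preimage isOpen_ball isOpen_compl_singleton
  have hmem : (ball (0 : ℂ) 1 ∩ (deriv (hardyEval g)) ⁻¹' {(0 : ℂ)}ᶜ) ∈ nhds z₀ :=
    hV.mem_nhds ⟨hz₀, hd⟩
  filter_upwards [hmem] with z hz
  obtain ⟨hz1, hz2⟩ := hz
  have hz2' : deriv (hardyEval g) z ≠ 0 := hz2
  rw [hu z hz1, mul_div_cancel_right₀ _ hz2']
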